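/- Let k ≥ 1, m ≥ 1 and n ≥ 1 be integers, and let C be a linear code of length n over R_{k,m} (an R_{k,m}-submodule of R_{k,m}^n). Then |C| · |C^⊥| = |R_{k,m}|^n = 2^{kmn}. -/

import Mathlib

open MvPolynomial

set_option synthInstance.maxHeartbeats 1000000
set_option maxHeartbeats 1000000

/-- The ring `R_{k,m} = F_2[u,v]/⟨u^k, v^m⟩`. -/
noncomputable abbrev Rkm (k m : ℕ) : Type :=
  MvPolynomial (Fin 2) (ZMod 2) ⧸
    (Ideal.span {(X 0 : MvPolynomial (Fin 2) (ZMod 2)) ^ k, (X 1 : MvPolynomial (Fin 2) (ZMod 2)) ^ m})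

namespace RkmAux

abbrev P : Type := MvPolynomial (Fin 2) (ZMod 2)

noncomputable abbrev Ikm (k m : ℕ) : Ideal P :=
  Ideal.span {(X 0 : P) ^ k, (X 1 : P) ^ m}

theorem mem_Ikm_iff (k m : ℕ) (p : P) :
    p ∈ Ikm k m ↔ ∀ d : Fin 2 →₀ ℕ, d 0 < k → d 1 < m → coeff d p = 0 := by
  constructor
  · intro hp d hd0 hd1
    rw [Ideal.mem_span_pair] at hp
    obtain ⟨a, b, rfl⟩ := hp
    rw [coeff_add, X_pow_eq_monomial, X_pow_eq_monomial, coeff_mul_monomial',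
      coeff_mul_monomial']
    rw [if_neg, if_neg, add_zero]
    · rw [Finsupp.single_le_iff]; omega
    · rw [Finsupp.single_le_iff]; omega
  · intro h
    rw [as_sum p]
    apply Ideal.sum_mem
    intro d hd
    by_cases h0 : k ≤ d 0
    · have : monomial d (coeff d p) =
          monomial (d - Finsupp.single 0 k) (coeff d p) * (X 0 : P) ^ k := by
        rw [X_pow_eq_monomial, monomial_mul, mul_one,
          tsub_add_cancel_of_le (Finsupp.single_le_iff.mpr h0)]
      rw [this]
      exact Ideal.mul_mem_left _ _ (Ideal.subset_span (by simp))
    · by_cases h1 : m ≤ d 1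
      · have : monomial d (coeff d p) =
            monomial (d - Finsupp.single 1 m) (coeff d p) * (X 1 : P) ^ m := by
          rw [X_pow_eq_monomial, monomial_mul, mul_one,
            tsub_add_cancel_of_le (Finsupp.single_le_iff.mpr h1)]
        rw [this]
        exact Ideal.mul_mem_left _ _ (Ideal.subset_span (by simp))
      · exfalso
        exact (mem_support_iff.mp hd) (h d (by omega) (by omega))

end RkmAux

namespace RkmAux

def sGood (k m : ℕ) : Set (Fin 2 →₀ ℕ) := {d | d 0 < k ∧ d 1 < m}

lemma finsupp_fin2_ext (d : Fin 2 →₀ ℕ) :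
    Finsupp.single 0 (d 0) + Finsupp.single 1 (d 1) = d := by
  ext i
  fin_cases i <;> simp [Finsupp.single_apply]

noncomputable def goodEquiv (k m : ℕ) : sGood k m ≃ Fin k × Fin m where
  toFun d := (⟨d.1 0, d.2.1⟩, ⟨d.1 1, d.2.2⟩)
  invFun x := ⟨Finsupp.single 0 (x.1 : ℕ) + Finsupp.single 1 (x.2 : ℕ), by
    constructor  <;> simp [Finsupp.single_apply]⟩
  left_inv d := by
    ext1
    exact finsupp_fin2_ext d.1
  right_inv x := by
    ext <;> simp [Finsupp.single_apply]

noncomputable instance (k m : ℕ) : Fintype (sGood k m) :=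
  Fintype.ofEquiv _ (goodEquiv k m).symm

lemma card_sGood (k m : ℕ) : Fintype.card (sGood k m) = k * m := by
  rw [Fintype.card_congr (goodEquiv k m)]
  simp

noncomputable def Wgood (k m : ℕ) : Submodule (ZMod 2) P :=
  restrictSupport (ZMod 2) (sGood k m)

lemma mem_Wgood (k m : ℕ) (p : P) :
    p ∈ Wgood k m ↔ ∀ d ∈ p.support, (d : Fin 2 →₀ ℕ) 0 < k ∧ d 1 < m := by
  rw [Wgood, restrictSupport, AddMonoidAlgebra.mem_supported]
  constructor
  · intro h d hd; exact h hd
  · intro h d hd; exact h d hd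

noncomputable instance (k m : ℕ) : FiniteDimensional (ZMod 2) (Wgood k m) :=
  Module.Finite.of_basis (basisRestrictSupport (ZMod 2) (sGood k m))

lemma finrank_Wgood (k m : ℕ) :
    Module.finrank (ZMod 2) (Wgood k m) = k * m := by
  rw [show Wgood k m = restrictSupport (ZMod 2) (sGood k m) from rfl,
    Module.finrank_eq_card_basis (basisRestrictSupport (ZMod 2) (sGood k m)), card_sGood]

end RkmAux

namespace RkmAux

noncomputable def mkW (k m : ℕ) : Wgood k m →ₗ[ZMod 2] Rkm k m :=
  (Ideal.Quotient.mkₐ (ZMod 2) (Ikm k m)).toLinearMap ∘ₗ (Wgood k m).subtype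

lemma mkW_apply (k m : ℕ) (w : Wgood k m) :
    mkW k m w = Ideal.Quotient.mk (Ikm k m) (w : P) := rfl

/-- good part of a polynomial -/
noncomputable def gpart (k m : ℕ) (p : P) : P :=
  ∑ d ∈ p.support.filter (fun d => d 0 < k ∧ d 1 < m), monomial d (coeff d p)

lemma coeff_gpart (k m : ℕ) (p : P) (d : Fin 2 →₀ ℕ) :
    coeff d (gpart k m p) = if d 0 < k ∧ d 1 < m then coeff d p else 0 := by
  rw [gpart]
  simp only [coeff_sum, coeff_monomial]
  rw [Finset.sum_ite_eq']
  by_cases h : d 0 < k ∧ d 1 < m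
  · rw [if_pos h]
    by_cases hs : d ∈ p.support
    · rw [if_pos (Finset.mem_filter.mpr ⟨hs, h⟩)]
    · rw [notMem_support_iff.mp hs]
      apply if_neg
      intro hc
      exact hs (Finset.mem_filter.mp hc).1
  · rw [if_neg h]
    apply if_neg
    intro hc
    exact h (Finset.mem_filter.mp hc).2

lemma gpart_mem (k m : ℕ) (p : P) : gpart k m p ∈ Wgood k m := by
  rw [mem_Wgood]
  intro d hd
  by_contra hc
  exact (mem_support_iff.mp hd) (by rw [coeff_gpart, if_neg hc])

lemma sub_gpart_mem (k m : ℕ) (p : P) : p - gpart k m p ∈ Ikm k m := by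
  rw [mem_Ikm_iff]
  intro d h0 h1
  rw [coeff_sub, coeff_gpart, if_pos ⟨h0, h1⟩, sub_self]

lemma mkW_bijective (k m : ℕ) : Function.Bijective (mkW k m) := by
  constructor
  · rw [← LinearMap.ker_eq_bot, LinearMap.ker_eq_bot']
    intro w hw
    rw [mkW_apply, Ideal.Quotient.eq_zero_iff_mem, mem_Ikm_iff] at hw
    have hsupp := (mem_Wgood k m _).mp w.2
    ext1
    apply MvPolynomial.ext
    intro d
    by_cases hd : (d : Fin 2 →₀ ℕ) 0 < k ∧ d 1 < m
    · rw [hw d hd.1 hd.2]; simp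
    · rw [notMem_support_iff.mp (fun hc => hd (hsupp d hc))]; simp
  · intro x
    obtain ⟨p, rfl⟩ := Ideal.Quotient.mk_surjective x
    refine ⟨⟨gpart k m p, gpart_mem k m p⟩, ?_⟩
    rw [mkW_apply]
    exact ((Ideal.Quotient.mk_eq_mk_iff_sub_mem _ _).mpr
      (by simpa using (Ikm k m).neg_mem (sub_gpart_mem k m p))).symm ▸ rfl

noncomputable def WRequiv (k m : ℕ) : Wgood k m ≃ₗ[ZMod 2] Rkm k m :=
  LinearEquiv.ofBijective (mkW k m) (mkW_bijective k m)

noncomputable instance (k m : ℕ) : FiniteDimensional (ZMod 2) (Rkm k m) :=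
  Module.Finite.equiv (WRequiv k m)

lemma finrank_Rkm (k m : ℕ) : Module.finrank (ZMod 2) (Rkm k m) = k * m := by
  rw [← (WRequiv k m).finrank_eq, finrank_Wgood]

end RkmAux

namespace RkmAux

noncomputable def dstar (k m : ℕ) : Fin 2 →₀ ℕ :=
  Finsupp.single 0 (k-1) + Finsupp.single 1 (m-1)

@[simp] lemma dstar_apply0 (k m : ℕ) : dstar k m 0 = k - 1 := by
  simp [dstar, Finsupp.single_apply]

@[simp] lemma dstar_apply1 (k m : ℕ) : dstar k m 1 = m - 1 := by
  simp [dstar, Finsupp.single_apply]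

noncomputable def chi (k m : ℕ) : Rkm k m →ₗ[ZMod 2] ZMod 2 :=
  (lcoeff (ZMod 2) (dstar k m)) ∘ₗ (Wgood k m).subtype ∘ₗ (WRequiv k m).symm.toLinearMap

lemma chi_mk (k m : ℕ) (hk : 1 ≤ k) (hm : 1 ≤ m) (p : P) :
    chi k m (Ideal.Quotient.mk (Ikm k m) p) = coeff (dstar k m) p := by
  set w := (WRequiv k m).symm (Ideal.Quotient.mk (Ikm k m) p) with hw
  have h1 : Ideal.Quotient.mk (Ikm k m) (w : P) = Ideal.Quotient.mk (Ikm k m) p := by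
    have := (WRequiv k m).apply_symm_apply (Ideal.Quotient.mk (Ikm k m) p)
    rw [← hw] at this
    exact this
  have h2 : (w : P) - p ∈ Ikm k m := (Ideal.Quotient.mk_eq_mk_iff_sub_mem _ _).mp h1
  have h3 : coeff (dstar k m) ((w : P) - p) = 0 :=
    (mem_Ikm_iff k m _).mp h2 _ (by simp; omega) (by simp; omega)
  rw [coeff_sub, sub_eq_zero] at h3
  have h4 : chi k m (Ideal.Quotient.mk (Ikm k m) p) = coeff (dstar k m) (w : P) := rfl
  rw [h4]
  exact h3

lemma chi_nondeg (k m : ℕ) (hk : 1 ≤ k) (hm : 1 ≤ m) (x : Rkm k m)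
    (h : ∀ r : Rkm k m, chi k m (x * r) = 0) : x = 0 := by
  by_contra hx
  set w := (WRequiv k m).symm x with hw
  have hxw : Ideal.Quotient.mk (Ikm k m) (w : P) = x := (WRequiv k m).apply_symm_apply x
  have hw0 : (w : P) ≠ 0 := by
    intro hc
    apply hx
    rw [← hxw, hc, map_zero]
  obtain ⟨d, hd⟩ := Finset.nonempty_of_ne_empty (fun hc => hw0 (support_eq_empty.mp hc))
  have hgood := (mem_Wgood k m _).mp w.2 d hd
  set e : Fin 2 →₀ ℕ := Finsupp.single 0 (k-1-d 0) + Finsupp.single 1 (m-1-d 1) with he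
  have he0 : e 0 = k-1-d 0 := by simp [he, Finsupp.single_apply]
  have he1 : e 1 = m-1-d 1 := by simp [he, Finsupp.single_apply]
  have key : chi k m (x * Ideal.Quotient.mk (Ikm k m) (monomial e 1)) = coeff d (w : P) := by
    rw [← hxw, ← map_mul, chi_mk k m hk hm, coeff_mul_monomial']
    rw [if_pos, mul_one]
    · congr 1
      ext i
      fin_cases i
      · show dstar k m 0 - e 0 = d 0
        rw [dstar_apply0, he0]; omega
      · show dstar k m 1 - e 1 = d 1
        rw [dstar_apply1, he1]; omega
    · rw [Finsupp.le_iff]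
      intro i _
      fin_cases i
      · show e 0 ≤ dstar k m 0
        rw [dstar_apply0, he0]; omega
      · show e 1 ≤ dstar k m 1
        rw [dstar_apply1, he1]; omega
  rw [h _] at key
  exact (mem_support_iff.mp hd) key.symm

end RkmAux

namespace RkmAux

lemma card_eq_two_pow (M : Type*) [AddCommGroup M] [Module (ZMod 2) M]
    [Module.Finite (ZMod 2) M] :
    Nat.card M = 2 ^ Module.finrank (ZMod 2) M := by
  have : Finite M := Module.finite_of_finite (ZMod 2)
  have : Fintype M := Fintype.ofFinite M
  rw [Nat.card_eq_fintype_card, Module.card_eq_pow_finrank (K := ZMod 2) (V := M), ZMod.card]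

noncomputable def bform (k m n : ℕ) : LinearMap.BilinForm (ZMod 2) (Fin n → Rkm k m) :=
  LinearMap.mk₂ (ZMod 2) (fun a b => chi k m (∑ i, a i * b i))
    (fun a a' b => by
      simp only [Pi.add_apply, add_mul, Finset.sum_add_distrib, map_add])
    (fun c a b => by
      simp only [Pi.smul_apply, smul_mul_assoc, ← Finset.smul_sum, map_smul])
    (fun a b b' => by
      simp only [Pi.add_apply, mul_add, Finset.sum_add_distrib, map_add])
    (fun c a b => by
      simp only [Pi.smul_apply, mul_smul_comm, ← Finset.smul_sum, map_smul])

lemma bform_apply (k m n : ℕ) (a b : Fin n → Rkm k m) :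
    bform k m n a b = chi k m (∑ i, a i * b i) := rfl

lemma bform_isRefl (k m n : ℕ) : (bform k m n).IsRefl := by
  intro a b h
  rw [bform_apply] at h ⊢
  rw [show ∑ i, b i * a i = ∑ i, a i * b i from
    Finset.sum_congr rfl fun i _ => mul_comm _ _]
  exact h

lemma bform_nondeg (k m n : ℕ) (hk : 1 ≤ k) (hm : 1 ≤ m) :
    (bform k m n).Nondegenerate := by
  refine (bform_isRefl k m n).nondegenerate_iff_separatingLeft.mpr ?_
  intro a h
  funext j
  rw [Pi.zero_apply]
  apply chi_nondeg k m hk hm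
  intro r
  have hb := h (Pi.single j r)
  rw [bform_apply] at hb
  rw [Finset.sum_eq_single j (fun i _ hij => by rw [Pi.single_eq_of_ne hij, mul_zero])
    (fun hj => absurd (Finset.mem_univ j) hj), Pi.single_eq_same] at hb
  exact hb

end RkmAux

open RkmAux

/-- For any linear code `C` of length `n` over `R_{k,m}` (an `R_{k,m}`-submodule of
`R_{k,m}^n`), one has `|C| · |C^⊥| = |R_{k,m}|^n = 2^{kmn}`. -/
theorem Rkm_card_mul_card_dual (k m n : ℕ) (hk : 1 ≤ k) (hm : 1 ≤ m) (hn : 1 ≤ n)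
    (C : Submodule (Rkm k m) (Fin n → Rkm k m)) :
    Nat.card C *
      Nat.card {b : Fin n → Rkm k m | ∀ a ∈ C, ∑ i, a i * b i = 0} = 2 ^ (k * m * n) ∧
    Nat.card C *
      Nat.card {b : Fin n → Rkm k m | ∀ a ∈ C, ∑ i, a i * b i = 0} =
        Nat.card (Rkm k m) ^ n := by
  classical
  set C' : Submodule (ZMod 2) (Fin n → Rkm k m) := C.restrictScalars (ZMod 2) with hC'
  have hset : {b : Fin n → Rkm k m | ∀ a ∈ C, ∑ i, a i * b i = 0} =
      ↑((bform k m n).orthogonal C') := by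
    ext b
    rw [Set.mem_setOf_eq, SetLike.mem_coe, LinearMap.BilinForm.mem_orthogonal_iff]
    constructor
    · intro h a ha
      have : (∑ i, a i * b i) = 0 := h a ha
      show bform k m n a b = 0
      rw [bform_apply, this, map_zero]
    · intro h a ha
      apply chi_nondeg k m hk hm
      intro r
      have hra : r • a ∈ C := C.smul_mem r ha
      have := h (r • a) hra
      rw [bform_apply] at this
      rw [mul_comm, show r * ∑ i, a i * b i = ∑ i, (r • a) i * b i by
        rw [Finset.mul_sum]
        exact Finset.sum_congr rfl fun i _ => by
          rw [Pi.smul_apply, smul_eq_mul, mul_assoc]]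
      exact this
  have hrefl := bform_isRefl k m n
  have hnd := bform_nondeg k m n hk hm
  have hV : Module.finrank (ZMod 2) (Fin n → Rkm k m) = k * m * n := by
    rw [Module.finrank_pi_fintype]
    simp [finrank_Rkm]
    ring
  have hcardC : Nat.card C = 2 ^ Module.finrank (ZMod 2) C' := by
    rw [← card_eq_two_pow]
    exact Nat.card_congr (Submodule.restrictScalarsEquiv (ZMod 2) _ _ C).toEquiv.symm
  have horth : Module.finrank (ZMod 2) ((bform k m n).orthogonal C') =
      k * m * n - Module.finrank (ZMod 2) C' := by
    rw [LinearMap.BilinForm.finrank_orthogonal hnd C', hV]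
  have hle : Module.finrank (ZMod 2) C' ≤ k * m * n := hV ▸ Submodule.finrank_le C'
  have hcardO : Nat.card {b : Fin n → Rkm k m | ∀ a ∈ C, ∑ i, a i * b i = 0} =
      2 ^ (k * m * n - Module.finrank (ZMod 2) C') := by
    rw [hset]
    rw [show (↑((bform k m n).orthogonal C') : Set (Fin n → Rkm k m)) =
      ((bform k m n).orthogonal C' : Set (Fin n → Rkm k m)) from rfl]
    rw [← horth, ← card_eq_two_pow]
    rfl
  have hmain : Nat.card C *
      Nat.card {b : Fin n → Rkm k m | ∀ a ∈ C, ∑ i, a i * b i = 0} = 2 ^ (k * m * n) := by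
    have he : Module.finrank (ZMod 2) C' + (k * m * n - Module.finrank (ZMod 2) C') =
        k * m * n := Nat.add_sub_cancel' hle
    rw [hcardC, hcardO, ← pow_add, he]
  refine ⟨hmain, hmain.trans ?_⟩
  rw [card_eq_two_pow, finrank_Rkm, ← pow_mul]
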